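/- Let Z be a real normed space and let D, E, D_k, E_k ⊆ Z (k ∈ ℕ). Assume the uniform approximation properties: there are sequences (t_k)_{k∈ℕ} and (r_k)_{k∈ℕ} of positive reals with t_k → 0 and r_k → 0 such that inf_{η∈D} ‖η − ξ‖_Z ≤ t_k for every ξ ∈ D_k and inf_{η∈E} ‖η − ζ‖_Z ≤ r_k for every ζ ∈ E_k. Assume further the data closure property: whenever a sequence (ŷ_j, ẑ_j) with (ŷ_j, ẑ_j) ∈ D × E for all j satisfies (y, z) = Δ-lim_{j→∞} (ŷ_j, ẑ_j), then y belongs to the norm closure of D and z ∈ E. Then for every strictly increasing sequence (k_j)_{j∈ℕ} in ℕ and every sequence (y_j, z_j) with (y_j, z_j) ∈ D_{k_j} × E_{k_j} for all j and (y, z) = Δ-lim_{j→∞} (y_j, z_j), it holds that y belongs to the norm closure of D and z ∈ E. -/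

import Mathlib

open Filter Topology

/-- Weak convergence of a sequence in a normed space: `f (y k) → f a` for every
continuous linear functional `f`. -/
def WeakConvergesTo {Z : Type*} [NormedAddCommGroup Z] [NormedSpace ℝ Z]
    (y : ℕ → Z) (a : Z) : Prop :=
  ∀ f : StrongDual ℝ Z, Tendsto (fun k => f (y k)) atTop (𝓝 (f a))

/-- Data convergence: `y_k ⇀ a`, `z_k ⇀ b`, and `y_k - z_k → a - b` strongly. -/
def DataConvergesTo {Z : Type*} [NormedAddCommGroup Z] [NormedSpace ℝ Z]
    (y z : ℕ → Z) (a b : Z) : Prop :=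
  WeakConvergesTo y a ∧ WeakConvergesTo z b ∧
    Tendsto (fun k => ‖(y k - z k) - (a - b)‖) atTop (𝓝 0)

/-- (DC1): every point of `D × E` is a data limit of a sequence of points of `D_k × E_k`. -/
def DC1 {Z : Type*} [NormedAddCommGroup Z] [NormedSpace ℝ Z]
    (D E : Set Z) (Dk Ek : ℕ → Set Z) : Prop :=
  ∀ a ∈ D, ∀ b ∈ E, ∃ y z : ℕ → Z,
    (∀ k, y k ∈ Dk k ∧ z k ∈ Ek k) ∧ DataConvergesTo y z a b

/-- (DC2): data limits of subsequences of points of `D_k × E_k` belong to `D × E`. -/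
def DC2 {Z : Type*} [NormedAddCommGroup Z] [NormedSpace ℝ Z]
    (D E : Set Z) (Dk Ek : ℕ → Set Z) : Prop :=
  ∀ kj : ℕ → ℕ, StrictMono kj → ∀ (y z : ℕ → Z) (a b : Z),
    (∀ j, y j ∈ Dk (kj j) ∧ z j ∈ Ek (kj j)) →
    DataConvergesTo y z a b → a ∈ D ∧ b ∈ E

lemma weak_of_norm_diff {Z : Type*} [NormedAddCommGroup Z] [NormedSpace ℝ Z]
    {y yh : ℕ → Z} {a : Z} (hy : WeakConvergesTo y a)
    (h : Tendsto (fun j => ‖yh j - y j‖) atTop (𝓝 0)) : WeakConvergesTo yh a := by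
  intro f
  have h1 : Tendsto (fun j => f (yh j - y j)) atTop (𝓝 0) := by
    apply squeeze_zero_norm (fun j => f.le_opNorm (yh j - y j))
    simpa using h.const_mul ‖f‖
  have := (h1.add (hy f))
  simp only [map_sub] at this
  simpa using this

/-- Under uniform approximation of `D_k` by `D` (within `t_k → 0`) and of
`E_k` by `E` (within `r_k → 0`), and the data closure property of `D × E`, every data
limit of a subsequence of points of `D_k × E_k` has its first component in the norm
closure of `D` and its second component in `E`. -/
theorem statement3 {Z : Type*} [NormedAddCommGroup Z] [NormedSpace ℝ Z]
    (D E : Set Z) (Dk Ek : ℕ → Set Z)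
    (t r : ℕ → ℝ) (htpos : ∀ k, 0 < t k) (hrpos : ∀ k, 0 < r k)
    (ht : Tendsto t atTop (𝓝 0)) (hr : Tendsto r atTop (𝓝 0))
    (hunifD : ∀ k, ∀ ξ ∈ Dk k, ∀ ε > (0 : ℝ), ∃ η ∈ D, ‖η - ξ‖ ≤ t k + ε)
    (hunifE : ∀ k, ∀ ζ ∈ Ek k, ∀ ε > (0 : ℝ), ∃ η ∈ E, ‖η - ζ‖ ≤ r k + ε)
    (hclos : ∀ (yh zh : ℕ → Z) (y z : Z), (∀ j, yh j ∈ D ∧ zh j ∈ E) →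
        DataConvergesTo yh zh y z → y ∈ closure D ∧ z ∈ E)
    (kj : ℕ → ℕ) (hkj : StrictMono kj)
    (y z : ℕ → Z) (a b : Z)
    (hmem : ∀ j, y j ∈ Dk (kj j) ∧ z j ∈ Ek (kj j))
    (hlim : DataConvergesTo y z a b) :
    a ∈ closure D ∧ b ∈ E := by
  choose yh hyhD hyh using fun j =>
    hunifD (kj j) (y j) (hmem j).1 (t (kj j)) (htpos (kj j))
  choose zh hzhE hzh using fun j =>
    hunifE (kj j) (z j) (hmem j).2 (r (kj j)) (hrpos (kj j))
  have htk : Tendsto (fun j => t (kj j) + t (kj j)) atTop (𝓝 0) := by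
    simpa using ((ht.comp hkj.tendsto_atTop).add (ht.comp hkj.tendsto_atTop))
  have hrk : Tendsto (fun j => r (kj j) + r (kj j)) atTop (𝓝 0) := by
    simpa using ((hr.comp hkj.tendsto_atTop).add (hr.comp hkj.tendsto_atTop))
  have hny : Tendsto (fun j => ‖yh j - y j‖) atTop (𝓝 0) :=
    squeeze_zero (fun j => norm_nonneg _) (fun j => hyh j) htk
  have hnz : Tendsto (fun j => ‖zh j - z j‖) atTop (𝓝 0) :=
    squeeze_zero (fun j => norm_nonneg _) (fun j => hzh j) hrk
  apply hclos yh zh a b (fun j => ⟨hyhD j, hzhE j⟩)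
  refine ⟨weak_of_norm_diff hlim.1 hny, weak_of_norm_diff hlim.2.1 hnz, ?_⟩
  apply squeeze_zero (fun j => norm_nonneg _)
    (g := fun j => ‖(y j - z j) - (a - b)‖ + ‖yh j - y j‖ + ‖zh j - z j‖)
  · intro j
    have : (yh j - zh j) - (a - b) =
        ((y j - z j) - (a - b)) + (yh j - y j) - (zh j - z j) := by abel
    rw [this]
    calc ‖((y j - z j) - (a - b)) + (yh j - y j) - (zh j - z j)‖
        ≤ ‖((y j - z j) - (a - b)) + (yh j - y j)‖ + ‖zh j - z j‖ := norm_sub_le _ _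
      _ ≤ ‖(y j - z j) - (a - b)‖ + ‖yh j - y j‖ + ‖zh j - z j‖ := by
          gcongr; exact norm_add_le _ _
  · simpa using (hlim.2.2.add hny).add hnz
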